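/- arXiv:1909.13402 — 4 statements merged into one kernel-verified Lean document; each statement's English description precedes it below -/
import Mathlib

section
/- Let (s_k)_{k≥0} be a sequence of p×p complex matrices and C a fixed mp×mp complex matrix such that the block row vectors satisfy (s_{j+1}, …, s_{j+m}) = (s_j, …, s_{j+m-1})·C for all j ≥ 0 (i.e., H_{j+1,m-1} = H_{j,m-1}·C in block-Hankel notation, acting on the last block-column shift). If the block Hankel matrices H_{0,m-1} = [s_{j+k}]_{j,k=0}^{m-1} and H_{1,m-1} = [s_{j+k+1}]_{j,k=0}^{m-1} are Hermitian, then every matrix s_k for k ≥ 2m is Hermitian, because H_{2k+l,m-1} = (C^k)* H_{l,m-1} C^k for all k, l ≥ 0. -/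
open Matrix

/-- If the block-Hankel matrices `H j = [s (j+a+b)]` of a block sequence satisfy the
companion recursion `H (j+1) = H j * C` and `H 0`, `H 1` are Hermitian, then
`H (2k+l) = (Cᵏ)ᴴ * H l * Cᵏ` for all `k, l`, and every `s k` with `k ≥ 2m` is Hermitian. -/
theorem stmt2 (p m : ℕ) (hm : 0 < m) (s : ℕ → Matrix (Fin p) (Fin p) ℂ)
    (C : Matrix (Fin m × Fin p) (Fin m × Fin p) ℂ)
    (H : ℕ → Matrix (Fin m × Fin p) (Fin m × Fin p) ℂ)
    (hH : ∀ j, H j = Matrix.of fun a b => s (j + (a.1 : ℕ) + (b.1 : ℕ)) a.2 b.2)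
    (hrec : ∀ j, H (j + 1) = H j * C)
    (h0 : (H 0).IsHermitian) (h1 : (H 1).IsHermitian) :
    (∀ k l, H (2 * k + l) = (C ^ k)ᴴ * H l * C ^ k) ∧
      ∀ k, 2 * m ≤ k → (s k).IsHermitian := by
  have hC : Cᴴ * H 0 = H 1 := by
    have := h1.eq
    rw [hrec 0, conjTranspose_mul, h0.eq] at this
    rw [this, hrec 0]
  have step : ∀ j, Cᴴ * H j = H (j + 1) := by
    intro j
    induction j with
    | zero => exact hC
    | succ n ih =>
        rw [hrec n, ← mul_assoc, ih, ← hrec (n + 1)]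
  have pow_step : ∀ k j, (C ^ k)ᴴ * H j = H (j + k) := by
    intro k
    induction k with
    | zero => intro j; simp
    | succ n ih =>
        intro j
        rw [pow_succ, conjTranspose_mul, mul_assoc, ih, step, Nat.add_assoc]
  have HpowC : ∀ j k, H (j + k) = H j * C ^ k := by
    intro j k
    induction k with
    | zero => simp
    | succ n ih =>
        rw [← Nat.add_assoc, hrec, ih, mul_assoc, ← pow_succ]
  have main : ∀ k l, H (2 * k + l) = (C ^ k)ᴴ * H l * C ^ k := by
    intro k l
    have h2 : 2 * k + l = l + k + k := by omega
    rw [pow_step, ← HpowC, h2]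
  refine ⟨main, fun k _ => ?_⟩
  have hherm : (H k).IsHermitian := by
    have hk : k = 2 * (k / 2) + k % 2 := (Nat.div_add_mod k 2).symm
    have hHk : H k = (C ^ (k / 2))ᴴ * H (k % 2) * C ^ (k / 2) := by
      conv_lhs => rw [hk]
      exact main _ _
    rw [hHk]
    have hl : (H (k % 2)).IsHermitian := by
      rcases Nat.mod_two_eq_zero_or_one k with h | h <;> rw [h]
      · exact h0
      · exact h1
    exact isHermitian_conjTranspose_mul_mul _ hl
  -- extract entry-wise hermitianness of s k
  ext x y
  have := congrFun (congrFun hherm.eq (⟨0, hm⟩, x)) (⟨0, hm⟩, y)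
  simp only [conjTranspose_apply, hH k, of_apply] at this
  simpa [conjTranspose_apply, RCLike.star_def] using this
end

section
/- Let F(z) = I_p z² + A₁ z + A₂ be a monic quadratic p×p matrix polynomial where A₁ and A₂ are positive definite Hermitian matrices. Then F is Hurwitz stable: every λ ∈ ℂ with det F(λ) = 0 satisfies Re λ < 0. -/
open Matrix
open scoped ComplexOrder

/-- A monic quadratic matrix polynomial `z² I + z A₁ + A₂` with positive definite
Hermitian coefficients is Hurwitz stable. -/
theorem stmt5 (p : ℕ) (A₁ A₂ : Matrix (Fin p) (Fin p) ℂ)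
    (h1 : A₁.PosDef) (h2 : A₂.PosDef) :
    ∀ lam : ℂ,
      (lam ^ 2 • (1 : Matrix (Fin p) (Fin p) ℂ) + lam • A₁ + A₂).det = 0 → lam.re < 0 := by
  intro lam hdet
  obtain ⟨v, hv, hmv⟩ := Matrix.exists_mulVec_eq_zero_iff.2 hdet
  have key : star v ⬝ᵥ ((lam ^ 2 • (1 : Matrix (Fin p) (Fin p) ℂ) + lam • A₁ + A₂) *ᵥ v) = 0 := by
    rw [hmv]; simp
  rw [Matrix.add_mulVec, Matrix.add_mulVec, Matrix.smul_mulVec,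
      Matrix.smul_mulVec, Matrix.one_mulVec, dotProduct_add,
      dotProduct_add, dotProduct_smul, dotProduct_smul] at key
  have ha : 0 < star v ⬝ᵥ v := by
    have := (Matrix.PosDef.one (n := Fin p) (R := ℂ)).dotProduct_mulVec_pos hv
    simpa using this
  have hb : 0 < star v ⬝ᵥ (A₁ *ᵥ v) := h1.dotProduct_mulVec_pos hv
  have hc : 0 < star v ⬝ᵥ (A₂ *ᵥ v) := h2.dotProduct_mulVec_pos hv
  set a := star v ⬝ᵥ v with hadef
  set b := star v ⬝ᵥ (A₁ *ᵥ v) with hbdef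
  set c := star v ⬝ᵥ (A₂ *ᵥ v) with hcdef
  rw [Complex.lt_def] at ha hb hc
  simp only [Complex.zero_re, Complex.zero_im] at ha hb hc
  have hre := congrArg Complex.re key
  have him := congrArg Complex.im key
  simp only [Complex.add_re, Complex.add_im, Complex.smul_re, Complex.smul_im,
    Complex.mul_re, Complex.mul_im, Complex.zero_re, Complex.zero_im, smul_eq_mul,
    pow_two] at hre him
  obtain ⟨ha1, ha2⟩ := ha
  obtain ⟨hb1, hb2⟩ := hb
  obtain ⟨hc1, hc2⟩ := hc
  rw [← ha2, ← hb2] at hre him; rw [← hc2] at him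
  set x := lam.re
  set y := lam.im
  by_contra hx
  push_neg at hx
  have hfac : y * (2 * x * a.re + b.re) = 0 := by linear_combination him
  have hpos : 0 < 2 * x * a.re + b.re := by nlinarith
  have hy : y = 0 := by
    rcases mul_eq_zero.1 hfac with h | h
    · exact h
    · exact absurd h hpos.ne'
  rw [hy] at hre
  nlinarith
end

section
/- Let F be a monic p×p complex matrix polynomial with even part F_e and odd part F_o (F(z) = F_e(z²) + z F_o(z²)). If F is Hurwitz stable, then every greatest right common divisor of the polynomials F_e(−z²) and z·F_o(−z²) is unimodular, i.e., has empty spectrum. -/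
open Polynomial Matrix

/-- `L` is a right divisor of `F`, i.e. `F = M · L` for some matrix polynomial `M`. -/
def IsRightDivisor (p : ℕ) (L F : Matrix (Fin p) (Fin p) (Polynomial ℂ)) : Prop :=
  ∃ M, F = M * L

/-- `L` is a greatest right common divisor of `F` and `G`. -/
def IsGRCD (p : ℕ) (F G L : Matrix (Fin p) (Fin p) (Polynomial ℂ)) : Prop :=
  IsRightDivisor p L F ∧ IsRightDivisor p L G ∧
    ∀ L', IsRightDivisor p L' F → IsRightDivisor p L' G → IsRightDivisor p L' L

/-- If a monic matrix polynomial `F(z) = F_e(z²) + z F_o(z²)` is Hurwitz stable, then every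
GRCD of `F_e(-z²)` and `z F_o(-z²)` is unimodular (has empty spectrum). -/
theorem stmt12 (p n : ℕ) (F Fe Fo : Matrix (Fin p) (Fin p) (Polynomial ℂ))
    (hdeg : ∀ i j, (F i j).natDegree ≤ n)
    (hmonic : (Matrix.of fun i j => (F i j).coeff n) = (1 : Matrix (Fin p) (Fin p) ℂ))
    (hsplit : ∀ i j, F i j = (Fe i j).comp (X ^ 2) + X * (Fo i j).comp (X ^ 2))
    (hstable : ∀ z : ℂ, (F.det).eval z = 0 → z.re < 0)
    (G : Matrix (Fin p) (Fin p) (Polynomial ℂ))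
    (hG : IsGRCD p (Matrix.of fun i j => (Fe i j).comp (-(X ^ 2)))
        (Matrix.of fun i j => X * (Fo i j).comp (-(X ^ 2))) G) :
    ∀ z : ℂ, (G.det).eval z ≠ 0 := by
  intro z0 hz
  obtain ⟨⟨MA, hMA⟩, ⟨MB, hMB⟩, -⟩ := hG
  set e : Polynomial ℂ →+* ℂ := evalRingHom z0 with he
  have hdetG : (G.map e).det = 0 := by
    have := (RingHom.map_det e G).symm
    rw [RingHom.mapMatrix_apply] at this
    rw [this]; exact hz
  obtain ⟨v, hv0, hv⟩ := Matrix.exists_mulVec_eq_zero_iff.mpr hdetG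
  have hA : (Matrix.of fun i j => (Fe i j).comp (-(X ^ 2))).map e *ᵥ v = 0 := by
    rw [hMA, Matrix.map_mul, ← Matrix.mulVec_mulVec, hv, Matrix.mulVec_zero]
  have hB : (Matrix.of fun i j => X * (Fo i j).comp (-(X ^ 2))).map e *ᵥ v = 0 := by
    rw [hMB, Matrix.map_mul, ← Matrix.mulVec_mulVec, hv, Matrix.mulVec_zero]
  -- key: for c = I or -I, F(c*z0) kills v
  have key : ∀ c : ℂ, c ^ 2 = -1 →
      F.map (eval (c * z0)) *ᵥ v = 0 := by
    intro c hc
    have hFmap : F.map (eval (c * z0)) =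
        (Matrix.of fun i j => (Fe i j).comp (-(X ^ 2))).map e
          + c • (Matrix.of fun i j => X * (Fo i j).comp (-(X ^ 2))).map e := by
      ext i j
      simp only [Matrix.map_apply, Matrix.add_apply, Matrix.smul_apply, Matrix.of_apply,
        he, coe_evalRingHom, eval_comp, eval_pow, eval_X, eval_mul, eval_neg, smul_eq_mul]
      rw [hsplit i j]
      have : (c * z0) ^ 2 = -(z0 ^ 2) := by
        rw [mul_pow, hc]; ring
      simp [eval_comp, this]
      ring
    rw [hFmap, Matrix.add_mulVec, hA, Matrix.smul_mulVec, hB, smul_zero, add_zero]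
  have hdetF : ∀ c : ℂ, c ^ 2 = -1 → (F.det).eval (c * z0) = 0 := by
    intro c hc
    have hz' : (F.map (evalRingHom (c * z0))).det = 0 :=
      Matrix.exists_mulVec_eq_zero_iff.mp ⟨v, hv0, key c hc⟩
    have h := RingHom.map_det (evalRingHom (c * z0)) F
    rw [RingHom.mapMatrix_apply] at h
    exact h.trans hz'

  have h1 := hstable _ (hdetF Complex.I Complex.I_sq)
  have h2 := hstable _ (hdetF (-Complex.I) (by rw [neg_pow]; simp [Complex.I_sq]))
  simp [Complex.mul_re, Complex.I_re, Complex.I_im] at h1 h2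
  linarith
end

section
/- Let A be a Hermitian matrix of size (n+m)×(n+m) in block form [[P,Q],[Q*,R]] with P an n×n invertible Hermitian block. Then the inertia of A equals the inertia of P plus the inertia of the Schur complement S = R − Q* P⁻¹ Q: π(A) = π(P) + π(S), ν(A) = ν(P) + ν(S), δ(A) = δ(P) + δ(S) (Haynsworth inertia additivity). -/
open Matrix Finset

namespace Hay

variable {k l : Type*} [Fintype k] [DecidableEq k] [Fintype l] [DecidableEq l]

/-- weighted real quadratic form -/
noncomputable def qw (w : k → ℝ) (x : k → ℂ) : ℝ := ∑ i, w i * Complex.normSq (x i)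

/-- hermitian form of a matrix -/
noncomputable def qM (M : Matrix k k ℂ) (x : k → ℂ) : ℝ := (star x ⬝ᵥ M.mulVec x).re

noncomputable def sgnSub (s : Finset k) : Submodule ℂ (k → ℂ) :=
  Submodule.span ℂ (Set.range fun i : (s : Set k) => (Pi.single (i : k) (1:ℂ) : k → ℂ))

lemma mem_sgnSub_apply {s : Finset k} {x : k → ℂ} (hx : x ∈ sgnSub s) {i : k} (hi : i ∉ s) :
    x i = 0 := by
  induction hx using Submodule.span_induction with
  | mem x hx =>
      obtain ⟨j, rfl⟩ := hx
      refine Pi.single_eq_of_ne (fun h => hi ?_) 1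
      subst h
      exact j.2
  | zero => rfl
  | add x y _ _ hx hy => simp [hx, hy]
  | smul c x _ hx => simp [hx]

lemma finrank_sgnSub (s : Finset k) : Module.finrank ℂ (sgnSub s) = s.card := by
  classical
  have hli : LinearIndependent ℂ (fun i : (s : Set k) => (Pi.single (i : k) (1:ℂ) : k → ℂ)) := by
    have h2 := ((Pi.basisFun ℂ k).linearIndependent).comp
      (fun i : (s : Set k) => (i : k)) Subtype.coe_injective
    convert h2 using 1
    funext i
    simp [Function.comp]
  rw [sgnSub, finrank_span_eq_card hli]
  simp

end Hay

set_option linter.unusedSectionVars false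

namespace Hay

variable {k l : Type*} [Fintype k] [DecidableEq k] [Fintype l] [DecidableEq l]

lemma qw_pos_on_sgnSub {w : k → ℝ} {x : k → ℂ}
    (hx : x ∈ sgnSub (univ.filter fun i => 0 < w i)) (hx0 : x ≠ 0) : 0 < qw w x := by
  classical
  obtain ⟨j, hj⟩ : ∃ j, x j ≠ 0 := by
    by_contra h
    push_neg at h
    exact hx0 (funext h)
  have hjs : j ∈ univ.filter fun i => 0 < w i := by
    by_contra h
    exact hj (mem_sgnSub_apply hx h)
  have hjw : 0 < w j := (Finset.mem_filter.mp hjs).2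
  apply Finset.sum_pos'
  · intro i _
    by_cases hi : i ∈ univ.filter fun i => 0 < w i
    · exact mul_nonneg (le_of_lt (Finset.mem_filter.mp hi).2) (Complex.normSq_nonneg _)
    · rw [mem_sgnSub_apply hx hi]
      simp
  · exact ⟨j, Finset.mem_univ j, mul_pos hjw (Complex.normSq_pos.mpr hj)⟩

lemma qw_nonpos_on_sgnSub {w : k → ℝ} {x : k → ℂ}
    (hx : x ∈ sgnSub (univ.filter fun i => ¬ 0 < w i)) : qw w x ≤ 0 := by
  classical
  apply Finset.sum_nonpos
  intro i _
  by_cases hi : i ∈ univ.filter fun i => ¬ 0 < w i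
  · have hw : w i ≤ 0 := le_of_not_gt (Finset.mem_filter.mp hi).2
    have : 0 ≤ Complex.normSq (x i) := Complex.normSq_nonneg _
    exact mul_nonpos_of_nonpos_of_nonneg hw this
  · rw [mem_sgnSub_apply hx hi]
    simp

/-- upper bound: any subspace on which `qw w` is positive definite has dim at most
the number of positive weights. -/
lemma finrank_le_posCount {w : k → ℝ} {W : Submodule ℂ (k → ℂ)}
    (hW : ∀ x ∈ W, x ≠ 0 → 0 < qw w x) :
    Module.finrank ℂ W ≤ (univ.filter fun i => 0 < w i).card := by
  classical
  by_contra h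
  push_neg at h
  set U := sgnSub (univ.filter fun i => ¬ 0 < w i) with hU
  have hcard : (univ.filter fun i => 0 < w i).card + (univ.filter fun i => ¬ 0 < w i).card
      = Fintype.card k := Finset.card_filter_add_card_filter_not _
  have hWU : 0 < Module.finrank ℂ (W ⊓ U : Submodule ℂ (k → ℂ)) := by
    have hsum := Submodule.finrank_sup_add_finrank_inf_eq W U
    have hle : Module.finrank ℂ (W ⊔ U : Submodule ℂ (k → ℂ)) ≤ Fintype.card k := by
      have := Submodule.finrank_le (W ⊔ U : Submodule ℂ (k → ℂ))
      simpa using this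
    have hUr : Module.finrank ℂ U = (univ.filter fun i => ¬ 0 < w i).card := finrank_sgnSub _
    omega
  obtain ⟨x, hxWU, hx0⟩ : ∃ x ∈ (W ⊓ U : Submodule ℂ (k → ℂ)), x ≠ (0 : k → ℂ) := by
    rw [Module.finrank_pos_iff] at hWU
    obtain ⟨⟨x, hx⟩, hxne⟩ := exists_ne (0 : (W ⊓ U : Submodule ℂ (k → ℂ)))
    exact ⟨x, hx, fun h => hxne (Subtype.ext h)⟩
  have h1 : 0 < qw w x := hW x hxWU.1 hx0
  have h2 : qw w x ≤ 0 := qw_nonpos_on_sgnSub hxWU.2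
  linarith

end Hay

namespace Hay

variable {k l : Type*} [Fintype k] [DecidableEq k] [Fintype l] [DecidableEq l]

lemma qw_neg (u : k → ℝ) (y : k → ℂ) : qw (fun i => -u i) y = -qw u y := by
  simp [qw, neg_mul, Finset.sum_neg_distrib]

lemma posCount_le {w : k → ℝ} {v : l → ℝ} (e : (k → ℂ) ≃ₗ[ℂ] (l → ℂ))
    (h : ∀ x, qw v (e x) = qw w x) :
    (univ.filter fun i => 0 < w i).card ≤ (univ.filter fun i => 0 < v i).card := by
  classical
  set W := sgnSub (univ.filter fun i => 0 < w i) with hW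
  have h1 : Module.finrank ℂ (W.map (e : (k → ℂ) →ₗ[ℂ] (l → ℂ))) = Module.finrank ℂ W :=
    LinearEquiv.finrank_map_eq e W
  have h2 : ∀ x ∈ W.map (e : (k → ℂ) →ₗ[ℂ] (l → ℂ)), x ≠ 0 → 0 < qw v x := by
    rintro x ⟨y, hy, rfl⟩ hx0
    have hy0 : y ≠ 0 := by
      rintro rfl
      exact hx0 (map_zero _)
    rw [show ((e : (k → ℂ) →ₗ[ℂ] (l → ℂ)) y) = e y from rfl, h y]
    exact qw_pos_on_sgnSub hy hy0
  calc (univ.filter fun i => 0 < w i).card = Module.finrank ℂ W := (finrank_sgnSub _).symm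
    _ = Module.finrank ℂ (W.map (e : (k → ℂ) →ₗ[ℂ] (l → ℂ))) := h1.symm
    _ ≤ (univ.filter fun i => 0 < v i).card := finrank_le_posCount h2

lemma posCount_eq {w : k → ℝ} {v : l → ℝ} (e : (k → ℂ) ≃ₗ[ℂ] (l → ℂ))
    (h : ∀ x, qw v (e x) = qw w x) :
    (univ.filter fun i => 0 < w i).card = (univ.filter fun i => 0 < v i).card := by
  refine le_antisymm (posCount_le e h) (posCount_le e.symm fun x => ?_)
  have := h (e.symm x)
  rw [e.apply_symm_apply] at this
  exact this.symm

lemma negCount_eq {w : k → ℝ} {v : l → ℝ} (e : (k → ℂ) ≃ₗ[ℂ] (l → ℂ))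
    (h : ∀ x, qw v (e x) = qw w x) :
    (univ.filter fun i => w i < 0).card = (univ.filter fun i => v i < 0).card := by
  have h' : ∀ x, qw (fun i => -v i) (e x) = qw (fun i => -w i) x := by
    intro x
    rw [qw_neg v, qw_neg w, h]
  have := posCount_eq e h'
  simpa [neg_pos] using this

end Hay

namespace Hay

variable {k l : Type*} [Fintype k] [DecidableEq k] [Fintype l] [DecidableEq l]

/-- linear equivalence from an invertible pair of matrices -/
noncomputable def mulVecEquiv (N N' : Matrix k k ℂ) (h1 : N * N' = 1) (h2 : N' * N = 1) :
    (k → ℂ) ≃ₗ[ℂ] (k → ℂ) :=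
  LinearEquiv.ofLinear N.mulVecLin N'.mulVecLin
    (by rw [← Matrix.mulVecLin_mul, h1, Matrix.mulVecLin_one])
    (by rw [← Matrix.mulVecLin_mul, h2, Matrix.mulVecLin_one])

@[simp] lemma mulVecEquiv_apply (N N' : Matrix k k ℂ) (h1 : N * N' = 1) (h2 : N' * N = 1)
    (x : k → ℂ) : mulVecEquiv N N' h1 h2 x = N *ᵥ x := rfl

lemma qM_diagonal (w : k → ℝ) (x : k → ℂ) :
    qM (diagonal fun i => (w i : ℂ)) x = qw w x := by
  simp only [qM, dotProduct, mulVec_diagonal, qw, Complex.re_sum]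
  refine Finset.sum_congr rfl fun i _ => ?_
  simp [Complex.mul_re, Complex.mul_im, Complex.normSq_apply]
  ring

lemma qM_congr (E M : Matrix k k ℂ) (x : k → ℂ) :
    qM (Eᴴ * M * E) x = qM M (E *ᵥ x) := by
  simp only [qM]
  rw [← Matrix.mulVec_mulVec, ← Matrix.mulVec_mulVec, Matrix.dotProduct_mulVec (star x),
    ← Matrix.star_mulVec]

lemma qM_spectral {M : Matrix k k ℂ} (hM : M.IsHermitian) (x : k → ℂ) :
    qM M x = qw hM.eigenvalues ((star (hM.eigenvectorUnitary : Matrix k k ℂ)) *ᵥ x) := by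
  have hdiag : (diagonal (RCLike.ofReal ∘ hM.eigenvalues) : Matrix k k ℂ)
      = diagonal fun i => ((hM.eigenvalues i : ℝ) : ℂ) := rfl
  conv_lhs => rw [show M = ((star (hM.eigenvectorUnitary : Matrix k k ℂ))ᴴ)
      * diagonal (RCLike.ofReal ∘ hM.eigenvalues) * (star (hM.eigenvectorUnitary : Matrix k k ℂ))
    from by
      rw [Matrix.star_eq_conjTranspose, conjTranspose_conjTranspose]
      exact hM.spectral_theorem]
  rw [qM_congr, hdiag, qM_diagonal]

end Hay

namespace Hay

variable {k l : Type*} [Fintype k] [DecidableEq k] [Fintype l] [DecidableEq l]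

lemma exists_equiv_of_isHermitian {M : Matrix k k ℂ} (hM : M.IsHermitian) :
    ∃ e : (k → ℂ) ≃ₗ[ℂ] (k → ℂ), ∀ x, qw hM.eigenvalues (e x) = qM M x := by
  set U := (hM.eigenvectorUnitary : Matrix k k ℂ) with hU
  have h1 : star U * U = 1 := Matrix.UnitaryGroup.star_mul_self _
  have h2 : U * star U = 1 := Matrix.mem_unitaryGroup_iff.mp hM.eigenvectorUnitary.2
  exact ⟨mulVecEquiv (star U) U h1 h2, fun x => (qM_spectral hM x).symm⟩

lemma qw_sum_elim (a : k → ℝ) (b : l → ℝ) (y : k ⊕ l → ℂ) :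
    qw (Sum.elim a b) y = qw a (y ∘ Sum.inl) + qw b (y ∘ Sum.inr) := by
  simp [qw, Fintype.sum_sum_type]

lemma qM_fromBlocks_diag (P : Matrix k k ℂ) (S : Matrix l l ℂ) (x : k ⊕ l → ℂ) :
    qM (fromBlocks P 0 0 S) x = qM P (x ∘ Sum.inl) + qM S (x ∘ Sum.inr) := by
  simp only [qM, fromBlocks_mulVec, Matrix.zero_mulVec, add_zero, zero_add]
  rw [← Complex.add_re]
  congr 1
  rw [show star x = Sum.elim (star (x ∘ Sum.inl)) (star (x ∘ Sum.inr)) from by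
    ext (i | i) <;> rfl]
  simp [sumElim_dotProduct_sumElim]

/-- counting filters over a sum type -/
lemma count_sum_elim (p : ℝ → Prop) [DecidablePred p] (a : k → ℝ) (b : l → ℝ) :
    (univ.filter fun i : k ⊕ l => p (Sum.elim a b i)).card
      = (univ.filter fun i => p (a i)).card + (univ.filter fun i => p (b i)).card := by
  classical
  rw [← Finset.card_toLeft_add_card_toRight]
  congr 1
  · congr 1
    ext x
    simp
  · congr 1
    ext x
    simp

end Hay

namespace Hay

variable {k : Type*} [Fintype k] [DecidableEq k]

lemma trichotomy (f : k → ℝ) :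
    (univ.filter fun i => 0 < f i).card + (univ.filter fun i => f i < 0).card
      + (univ.filter fun i => f i = 0).card = Fintype.card k := by
  classical
  have h1 : (univ.filter fun i => 0 < f i).card + (univ.filter fun i => ¬ 0 < f i).card
      = Fintype.card k := by
    rw [Finset.card_filter_add_card_filter_not]
    exact Finset.card_univ
  have h2 : (univ.filter fun i => ¬ 0 < f i)
      = (univ.filter fun i => f i < 0) ∪ (univ.filter fun i => f i = 0) := by
    ext i
    simp only [Finset.mem_filter, Finset.mem_union, Finset.mem_univ, true_and, not_lt]
    constructor
    · intro h
      exact h.lt_or_eq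
    · rintro (h | h) <;> simp [h, le_of_lt, h.le]
  have h3 : Disjoint (univ.filter fun i => f i < 0) (univ.filter fun i => f i = 0) := by
    rw [Finset.disjoint_filter]
    intro i _ h h'
    rw [h'] at h
    exact lt_irrefl 0 h
  rw [h2, Finset.card_union_of_disjoint h3] at h1
  omega

end Hay


open Hay

/-- Haynsworth inertia additivity: for a Hermitian block matrix `A = [[P, Q], [Qᴴ, R]]`
with `P` invertible Hermitian, the numbers of positive, negative and zero eigenvalues of
`A` are the sums of the corresponding counts for `P` and for the Schur complement
`S = R - Qᴴ P⁻¹ Q`. -/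
theorem stmt15 (n m : ℕ) (P : Matrix (Fin n) (Fin n) ℂ) (Q : Matrix (Fin n) (Fin m) ℂ)
    (R : Matrix (Fin m) (Fin m) ℂ)
    (hA : (Matrix.fromBlocks P Q Qᴴ R).IsHermitian)
    (hP : P.IsHermitian) (hPinv : IsUnit P)
    (hS : (R - Qᴴ * P⁻¹ * Q).IsHermitian) :
    ((Finset.univ.filter fun i => 0 < hA.eigenvalues i).card =
        (Finset.univ.filter fun i => 0 < hP.eigenvalues i).card +
          (Finset.univ.filter fun i => 0 < hS.eigenvalues i).card) ∧
      ((Finset.univ.filter fun i => hA.eigenvalues i < 0).card =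
        (Finset.univ.filter fun i => hP.eigenvalues i < 0).card +
          (Finset.univ.filter fun i => hS.eigenvalues i < 0).card) ∧
      ((Finset.univ.filter fun i => hA.eigenvalues i = 0).card =
        (Finset.univ.filter fun i => hP.eigenvalues i = 0).card +
          (Finset.univ.filter fun i => hS.eigenvalues i = 0).card) := by
  classical
  obtain ⟨iP⟩ := hPinv.nonempty_invertible
  set A := Matrix.fromBlocks P Q Qᴴ R with hAdef
  set S := R - Qᴴ * P⁻¹ * Q with hSdef
  set E : Matrix (Fin n ⊕ Fin m) (Fin n ⊕ Fin m) ℂ := fromBlocks 1 (P⁻¹ * Q) 0 1 with hEdef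
  set E' : Matrix (Fin n ⊕ Fin m) (Fin n ⊕ Fin m) ℂ := fromBlocks 1 (-(P⁻¹ * Q)) 0 1 with hE'def
  have hinvOf : ⅟P = P⁻¹ := invOf_eq_nonsing_inv P
  have hdec : A = Eᴴ * fromBlocks P 0 0 S * E := by
    have h0 := Matrix.fromBlocks_eq_of_invertible₁₁ P Q Qᴴ R
    rw [hinvOf] at h0
    have hET : Eᴴ = fromBlocks 1 0 (Qᴴ * P⁻¹) 1 := by
      rw [hEdef]
      simp [Matrix.fromBlocks_conjTranspose, Matrix.conjTranspose_nonsing_inv, hP.eq]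
    rw [hAdef, hSdef, hET, hEdef, h0]
  have hEE' : E * E' = 1 := by
    rw [hEdef, hE'def, Matrix.fromBlocks_multiply]
    simp [Matrix.fromBlocks_one]
  have hE'E : E' * E = 1 := by
    rw [hEdef, hE'def, Matrix.fromBlocks_multiply]
    simp [Matrix.fromBlocks_one]
  obtain ⟨eA, heA⟩ := exists_equiv_of_isHermitian hA
  obtain ⟨eP, heP⟩ := exists_equiv_of_isHermitian hP
  obtain ⟨eS, heS⟩ := exists_equiv_of_isHermitian hS
  set sa := LinearEquiv.sumArrowLequivProdArrow (Fin n) (Fin m) ℂ ℂ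
  set G : (Fin n ⊕ Fin m → ℂ) ≃ₗ[ℂ] (Fin n ⊕ Fin m → ℂ) :=
    eA.symm ≪≫ₗ mulVecEquiv E E' hEE' hE'E ≪≫ₗ sa ≪≫ₗ (eP.prodCongr eS) ≪≫ₗ sa.symm with hGdef
  have hG : ∀ y, qw (Sum.elim hP.eigenvalues hS.eigenvalues) (G y) = qw hA.eigenvalues y := by
    intro y
    set x := eA.symm y with hx
    have hy : y = eA x := (eA.apply_symm_apply y).symm
    have hGy : G y = sa.symm (eP ((E *ᵥ x) ∘ Sum.inl), eS ((E *ᵥ x) ∘ Sum.inr)) := rfl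
    rw [hGy, qw_sum_elim]
    have h1 : ((sa.symm (eP ((E *ᵥ x) ∘ Sum.inl), eS ((E *ᵥ x) ∘ Sum.inr)) : Fin n ⊕ Fin m → ℂ) ∘ Sum.inl)
        = eP ((E *ᵥ x) ∘ Sum.inl) := rfl
    have h2 : ((sa.symm (eP ((E *ᵥ x) ∘ Sum.inl), eS ((E *ᵥ x) ∘ Sum.inr)) : Fin n ⊕ Fin m → ℂ) ∘ Sum.inr)
        = eS ((E *ᵥ x) ∘ Sum.inr) := rfl
    rw [h1, h2, heP, heS, ← qM_fromBlocks_diag, ← qM_congr, ← hdec, hy, heA]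
  have hpos := posCount_eq G hG
  have hneg := negCount_eq G hG
  have hposSum := count_sum_elim (fun t => 0 < t) hP.eigenvalues hS.eigenvalues
  have hnegSum := count_sum_elim (fun t => t < 0) hP.eigenvalues hS.eigenvalues
  have e1 : (Finset.univ.filter fun i => 0 < hA.eigenvalues i).card =
      (Finset.univ.filter fun i => 0 < hP.eigenvalues i).card +
        (Finset.univ.filter fun i => 0 < hS.eigenvalues i).card := by
    rw [hpos, hposSum]
  have e2 : (Finset.univ.filter fun i => hA.eigenvalues i < 0).card =
      (Finset.univ.filter fun i => hP.eigenvalues i < 0).card +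
        (Finset.univ.filter fun i => hS.eigenvalues i < 0).card := by
    rw [hneg, hnegSum]
  refine ⟨e1, e2, ?_⟩
  have tA := trichotomy hA.eigenvalues
  have tP := trichotomy hP.eigenvalues
  have tS := trichotomy hS.eigenvalues
  rw [Fintype.card_sum, Fintype.card_fin, Fintype.card_fin] at tA
  rw [Fintype.card_fin] at tP tS
  have hPzero : (Finset.univ.filter fun i => hP.eigenvalues i = 0).card = 0 := by
    rw [Finset.card_eq_zero, Finset.filter_eq_empty_iff]
    intro i _
    have hdet : P.det ≠ 0 := (Matrix.isUnit_iff_isUnit_det P).mp hPinv |>.ne_zero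
    rw [hP.det_eq_prod_eigenvalues] at hdet
    intro h0
    apply hdet
    apply Finset.prod_eq_zero (Finset.mem_univ i)
    rw [h0]
    simp
  omega
end
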